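/- arXiv:1309.4837 — 3 statements merged into one kernel-verified Lean document; each statement's English description precedes it below -/
import Mathlib

section
/- If G is a graph of order n with m edges, maximum degree Δ and minimum degree δ, then q(G) ≤ (1/2)·(Δ + 2δ − 1 + sqrt((Δ + 2δ − 1)² + 16m − 8(n − 1 + Δ)δ)). -/
open Matrix Finset BigOperators

/-- A graph is `k`-degenerate if every nonempty (induced) subgraph has a vertex
of degree at most `k` within it. -/
def SimpleGraph.Degenerate {V : Type*} (k : ℕ) (G : SimpleGraph V) : Prop :=
  ∀ s : Finset V, s.Nonempty → ∃ v ∈ s, {u ∈ (s : Set V) | G.Adj v u}.ncard ≤ k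

/-- `SGraph n k`: the join of a complete graph on the first `k` vertices with an
independent set on the remaining `n - k` vertices (the graph `S_{n,k}`). -/
def SGraph (n k : ℕ) : SimpleGraph (Fin n) where
  Adj u v := u ≠ v ∧ ((u : ℕ) < k ∨ (v : ℕ) < k)
  symm := by constructor; intro u v h; exact ⟨h.1.symm, h.2.symm⟩
  loopless := by constructor; intro u h; exact h.1 rfl

instance (n k : ℕ) : DecidableRel (SGraph n k).Adj := fun u v => by
  unfold SGraph; infer_instance

/-- The signless Laplacian `Q = D + A` as a real matrix. -/
noncomputable def signlessLaplacian {n : ℕ} (G : SimpleGraph (Fin n)) :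
    Matrix (Fin n) (Fin n) ℝ :=
  letI : DecidableRel G.Adj := Classical.decRel _
  Matrix.diagonal (fun v => (G.degree v : ℝ)) + G.adjMatrix ℝ

theorem signlessLaplacian_isHermitian {n : ℕ} (G : SimpleGraph (Fin n)) :
    (signlessLaplacian G).IsHermitian := by
  letI : DecidableRel G.Adj := Classical.decRel _
  unfold signlessLaplacian
  refine (Matrix.isHermitian_diagonal _).add ?_
  rw [Matrix.IsHermitian, Matrix.conjTranspose_eq_transpose_of_trivial]
  exact SimpleGraph.isSymm_adjMatrix G

theorem adjMatrix_isHermitian {n : ℕ} (G : SimpleGraph (Fin n)) [DecidableRel G.Adj] :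
    (G.adjMatrix ℝ).IsHermitian := by
  rw [Matrix.IsHermitian, Matrix.conjTranspose_eq_transpose_of_trivial]
  exact SimpleGraph.isSymm_adjMatrix G

/-- The largest adjacency eigenvalue `μ(G)`. -/
noncomputable def muIndex {n : ℕ} (G : SimpleGraph (Fin n)) : ℝ :=
  letI : DecidableRel G.Adj := Classical.decRel _
  ⨆ i, (adjMatrix_isHermitian G).eigenvalues i

/-- The largest signless Laplacian eigenvalue `q(G)` (the `Q`-index). -/
noncomputable def qIndex {n : ℕ} (G : SimpleGraph (Fin n)) : ℝ :=
  ⨆ i, (signlessLaplacian_isHermitian G).eigenvalues i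
private lemma quad_root_bound {t a b : ℝ} (h : t^2 ≤ a*t + b) :
    t ≤ (1/2) * (a + Real.sqrt (a^2 + 4*b)) := by
  have h1 : (2*t - a) ≤ Real.sqrt (a^2 + 4*b) := by
    calc 2*t - a ≤ |2*t - a| := le_abs_self _
    _ = Real.sqrt ((2*t - a)^2) := (Real.sqrt_sq_eq_abs _).symm
    _ ≤ Real.sqrt (a^2 + 4*b) := Real.sqrt_le_sqrt (by nlinarith)
  linarith

theorem stmt8 (n : ℕ) (G : SimpleGraph (Fin n)) [DecidableRel G.Adj] :
    qIndex G ≤ (1 / 2) * (((G.maxDegree : ℝ) + 2 * G.minDegree - 1) +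
      Real.sqrt (((G.maxDegree : ℝ) + 2 * G.minDegree - 1) ^ 2 +
        16 * G.edgeSet.ncard - 8 * ((n : ℝ) - 1 + G.maxDegree) * G.minDegree)) := by
  set Δ : ℝ := (G.maxDegree : ℝ) with hΔdef
  set δ : ℝ := (G.minDegree : ℝ) with hδdef
  set m : ℝ := (G.edgeSet.ncard : ℝ) with hmdef
  set a : ℝ := Δ + 2*δ - 1 with hadef
  set b : ℝ := 4*m - 2*((n:ℝ)-1)*δ - 2*Δ*δ with hbdef
  have hsqrtarg : a ^ 2 + 16 * m - 8 * ((n : ℝ) - 1 + Δ) * δ = a^2 + 4*b := by ring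
  rcases eq_or_ne n 0 with hn | hn
  · subst hn
    have hq : qIndex G = 0 := by
      unfold qIndex; exact Real.iSup_of_isEmpty _
    have hΔ0 : G.maxDegree = 0 := by
      simp [SimpleGraph.maxDegree]
    have hδ0 : G.minDegree = 0 := by
      simp [SimpleGraph.minDegree]
    have hm0 : G.edgeSet.ncard = 0 := by
      have : G.edgeSet = ∅ := Set.eq_empty_of_isEmpty _
      simp [this]
    rw [hq, hsqrtarg, hbdef, hadef, hΔdef, hδdef, hmdef, hΔ0, hδ0, hm0]
    norm_num
  · haveI : Nonempty (Fin n) := ⟨⟨0, Nat.pos_of_ne_zero hn⟩⟩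
    -- basic degree facts
    have hdleΔ : ∀ v, (G.degree v : ℝ) ≤ Δ := fun v => by
      rw [hΔdef]; exact_mod_cast G.degree_le_maxDegree v
    have hdgeδ : ∀ v, δ ≤ (G.degree v : ℝ) := fun v => by
      rw [hδdef]; exact_mod_cast G.minDegree_le_degree v
    have hδ0 : 0 ≤ δ := by positivity
    have hsumdeg : ∑ v, (G.degree v : ℝ) = 2 * m := by
      rw [hmdef]
      rw [show G.edgeSet.ncard = G.edgeFinset.card by
        rw [SimpleGraph.edgeFinset, Set.ncard_eq_toFinset_card']]
      exact_mod_cast congrArg (Nat.cast : ℕ → ℝ) G.sum_degrees_eq_twice_card_edges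
    have hnδ : (n : ℝ) * δ ≤ 2 * m := by
      calc (n : ℝ) * δ = ∑ _v : Fin n, δ := by simp [mul_comm]
      _ ≤ ∑ v, (G.degree v : ℝ) := Finset.sum_le_sum fun v _ => hdgeδ v
      _ = 2 * m := hsumdeg
    set q : ℝ := qIndex G with hqdef
    rcases le_or_gt q (2*δ) with hq2 | hq2
    · -- easy case : q ≤ 2δ and 2δ satisfies the quadratic
      refine le_trans hq2 ?_
      rw [hsqrtarg]
      exact quad_root_bound (by nlinarith)
    · -- main case
      have hq0 : 0 < q := lt_of_le_of_lt (by positivity) hq2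
      obtain ⟨i₀, hi₀⟩ : ∃ i, (signlessLaplacian_isHermitian G).eigenvalues i = q :=
        exists_eq_ciSup_of_finite
      set x : Fin n → ℝ := ⇑((signlessLaplacian_isHermitian G).eigenvectorBasis i₀) with hxdef
      have heig : signlessLaplacian G *ᵥ x = q • x := by
        rw [hxdef, (signlessLaplacian_isHermitian G).mulVec_eigenvectorBasis i₀, hi₀]
      have hQ : signlessLaplacian G
          = Matrix.diagonal (fun v => (G.degree v : ℝ)) + G.adjMatrix ℝ := by
        unfold signlessLaplacian; congr!
      have hcomp : ∀ v, (G.degree v : ℝ) * x v + ∑ w ∈ G.neighborFinset v, x w = q * x v := by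
        intro v
        have h := congrFun heig v
        rw [hQ] at h
        simpa [Matrix.add_mulVec, Matrix.mulVec_diagonal] using h
      set y : Fin n → ℝ := fun v => |x v| with hydef
      have hy0 : ∀ v, 0 ≤ y v := fun v => abs_nonneg _
      have hper : ∀ v, q * y v ≤ (G.degree v : ℝ) * y v + ∑ w ∈ G.neighborFinset v, y w := by
        intro v
        have : q * y v = |q * x v| := by
          rw [abs_mul, abs_of_pos hq0]
        rw [this, ← hcomp v]
        calc |(G.degree v : ℝ) * x v + ∑ w ∈ G.neighborFinset v, x w|
            ≤ |(G.degree v : ℝ) * x v| + |∑ w ∈ G.neighborFinset v, x w| := abs_add_le _ _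
          _ ≤ (G.degree v : ℝ) * y v + ∑ w ∈ G.neighborFinset v, y w := by
              gcongr
              · rw [abs_mul, abs_of_nonneg (by positivity)]
              · exact Finset.abs_sum_le_sum_abs _ _
      -- the maximizing vertex
      obtain ⟨u, -, hu⟩ := Finset.exists_max_image Finset.univ y Finset.univ_nonempty
      have humax : ∀ v, y v ≤ y u := fun v => hu v (Finset.mem_univ v)
      have hu0 : 0 < y u := by
        have hx0 : x ≠ 0 := by
          have h := ((signlessLaplacian_isHermitian G).eigenvectorBasis).orthonormal.ne_zero i₀
          intro hc; apply h; ext v; exact congrFun hc v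
        obtain ⟨v, hv⟩ := Function.ne_iff.mp hx0
        exact lt_of_lt_of_le (abs_pos.mpr hv) (humax v)
      -- the double sum swap
      have hswap : ∑ v, ∑ w ∈ G.neighborFinset v, y w = ∑ w, (G.degree w : ℝ) * y w := by
        have h1 : ∀ v, ∑ w ∈ G.neighborFinset v, y w
            = ∑ w, if G.Adj v w then y w else 0 := by
          intro v; rw [SimpleGraph.neighborFinset_eq_filter, Finset.sum_filter]
        simp_rw [h1]
        rw [Finset.sum_comm]
        refine Finset.sum_congr rfl fun w _ => ?_
        have : ∀ v, (if G.Adj v w then y w else 0) = (if G.Adj w v then y w else 0) := by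
          intro v; simp_rw [SimpleGraph.adj_comm]
        simp_rw [this]
        rw [← Finset.sum_filter, Finset.sum_const, ← SimpleGraph.neighborFinset_eq_filter,
          ← SimpleGraph.degree]
        simp [mul_comm]
      -- global inequality
      have hglobal : q * ∑ v, y v ≤ 2 * ∑ v, (G.degree v : ℝ) * y v := by
        calc q * ∑ v, y v = ∑ v, q * y v := Finset.mul_sum _ _ _
          _ ≤ ∑ v, ((G.degree v : ℝ) * y v + ∑ w ∈ G.neighborFinset v, y w) :=
              Finset.sum_le_sum fun v _ => hper v
          _ = ∑ v, (G.degree v : ℝ) * y v + ∑ v, ∑ w ∈ G.neighborFinset v, y w :=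
              Finset.sum_add_distrib
          _ = 2 * ∑ v, (G.degree v : ℝ) * y v := by rw [hswap]; ring
      have hstep : ∑ v, (G.degree v : ℝ) * y v ≤ δ * ∑ v, y v + (2*m - (n:ℝ)*δ) * y u := by
        calc ∑ v, (G.degree v : ℝ) * y v
            ≤ ∑ v, (δ * y v + ((G.degree v : ℝ) - δ) * y u) := by
              refine Finset.sum_le_sum fun v _ => ?_
              have h1 : ((G.degree v : ℝ) - δ) * y v ≤ ((G.degree v : ℝ) - δ) * y u :=
                mul_le_mul_of_nonneg_left (humax v) (by linarith [hdgeδ v])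
              linarith [h1]
          _ = δ * ∑ v, y v + (∑ v, ((G.degree v : ℝ) - δ)) * y u := by
              rw [Finset.sum_add_distrib, Finset.mul_sum, Finset.sum_mul]
          _ = δ * ∑ v, y v + (2*m - (n:ℝ)*δ) * y u := by
              rw [Finset.sum_sub_distrib, hsumdeg]
              simp [mul_comm]
      set d : ℝ := (G.degree u : ℝ) with hddef
      have hSlow : (1 + (q - d)) * y u ≤ ∑ v, y v := by
        have h1 : q * y u ≤ d * y u + ∑ w ∈ G.neighborFinset u, y w := hper u
        have h2 : y u + ∑ w ∈ G.neighborFinset u, y w ≤ ∑ v, y v := by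
          rw [← Finset.sum_insert (G.notMem_neighborFinset_self u)]
          exact Finset.sum_le_sum_of_subset_of_nonneg (Finset.subset_univ _)
            (fun v _ _ => hy0 v)
        linarith [h1, h2]
      have key : (q - 2*δ) * (1 + (q - d)) ≤ 2*(2*m - (n:ℝ)*δ) := by
        have hpos : (0:ℝ) ≤ q - 2*δ := by linarith
        have c1 : (q - 2*δ) * ((1 + (q - d)) * y u) ≤ (q - 2*δ) * ∑ v, y v :=
          mul_le_mul_of_nonneg_left hSlow hpos
        have c2 : (q - 2*δ) * ∑ v, y v ≤ 2*(2*m - (n:ℝ)*δ) * y u := by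
          have := hglobal; have := hstep; ring_nf at this ⊢
          linarith [hglobal, hstep]
        have c3 : (q - 2*δ) * (1 + (q - d)) * y u ≤ 2*(2*m - (n:ℝ)*δ) * y u := by
          linarith [c1, c2]
        exact le_of_mul_le_mul_right c3 hu0
      -- conclude the quadratic bound
      have hquad : q^2 ≤ a * q + b := by
        have hdΔ : d ≤ Δ := hdleΔ u
        nlinarith [key, mul_nonneg (sub_nonneg.mpr hdΔ) (by linarith : (0:ℝ) ≤ q - 2*δ)]
      rw [hsqrtarg]
      exact quad_root_bound hquad
end

section
/- Fix n ≥ 1 and 0 ≤ m ≤ n(n−1)/2. The function f(x,y) = y + 2x − 1 + sqrt((y + 2x − 1)² + 16m − 8(n − 1 + y)x), defined for x ≤ 2m/n and y ≥ 2m/n (where the radicand is nonnegative), is nonincreasing in x and nondecreasing in y. -/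
open Matrix Finset BigOperators

private lemma le_sqrt_of_sq_le {t R : ℝ} (h : t ^ 2 ≤ R) : t ≤ Real.sqrt R := by
  calc t ≤ |t| := le_abs_self t
    _ = Real.sqrt (t ^ 2) := (Real.sqrt_sq_eq_abs t).symm
    _ ≤ Real.sqrt R := Real.sqrt_le_sqrt h

/-- The function `f` of Proposition 1 of the paper. -/
noncomputable def fFun (n m x y : ℝ) : ℝ :=
  y + 2 * x - 1 + Real.sqrt ((y + 2 * x - 1) ^ 2 + 16 * m - 8 * (n - 1 + y) * x)

theorem stmt11 (n m : ℝ) (hn : 1 ≤ n) (hm0 : 0 ≤ m) (hm : m ≤ n * (n - 1) / 2) :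
    (∀ x₁ x₂ y : ℝ, x₁ ≤ x₂ → x₂ ≤ 2 * m / n → 2 * m / n ≤ y →
      0 ≤ (y + 2 * x₁ - 1) ^ 2 + 16 * m - 8 * (n - 1 + y) * x₁ →
      0 ≤ (y + 2 * x₂ - 1) ^ 2 + 16 * m - 8 * (n - 1 + y) * x₂ →
      fFun n m x₂ y ≤ fFun n m x₁ y) ∧
    (∀ x y₁ y₂ : ℝ, x ≤ 2 * m / n → 2 * m / n ≤ y₁ → y₁ ≤ y₂ →
      0 ≤ (y₁ + 2 * x - 1) ^ 2 + 16 * m - 8 * (n - 1 + y₁) * x →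
      0 ≤ (y₂ + 2 * x - 1) ^ 2 + 16 * m - 8 * (n - 1 + y₂) * x →
      fFun n m x y₁ ≤ fFun n m x y₂) := by
  have hn0 : (0:ℝ) < n := lt_of_lt_of_le one_pos hn
  have hub : 2 * m / n ≤ n - 1 := by
    rw [div_le_iff₀ hn0]; nlinarith
  have hlb : (0:ℝ) ≤ 2 * m / n := by positivity
  constructor
  · intro x₁ x₂ y h12 hx2 hy hR1 hR2
    set R₁ := (y + 2 * x₁ - 1) ^ 2 + 16 * m - 8 * (n - 1 + y) * x₁ with hR1def
    set R₂ := (y + 2 * x₂ - 1) ^ 2 + 16 * m - 8 * (n - 1 + y) * x₂ with hR2def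
    have hny : 2 * m ≤ n * y := by
      have := (div_le_iff₀ hn0).mp hy
      linarith
    have hnn : 2 * m ≤ n * (n - 1) := by nlinarith
    have hT : Real.sqrt R₂ ≤ 2 * n + y - 1 - 2 * x₂ := by
      have h1 : R₂ ≤ (2 * n + y - 1 - 2 * x₂) ^ 2 := by nlinarith [hx2, hub, hy]
      calc Real.sqrt R₂ ≤ Real.sqrt ((2 * n + y - 1 - 2 * x₂) ^ 2) := Real.sqrt_le_sqrt h1
        _ = |2 * n + y - 1 - 2 * x₂| := Real.sqrt_sq_eq_abs _
        _ = 2 * n + y - 1 - 2 * x₂ := abs_of_nonneg (by nlinarith)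
    have hs2 : Real.sqrt R₂ ^ 2 = R₂ := Real.sq_sqrt hR2
    have hs2n : 0 ≤ Real.sqrt R₂ := Real.sqrt_nonneg _
    have hd : 0 ≤ x₂ - x₁ := by linarith
    have key : Real.sqrt R₂ + 2 * (x₂ - x₁) ≤ Real.sqrt R₁ := by
      apply le_sqrt_of_sq_le
      nlinarith [mul_nonneg hd (sub_nonneg.mpr hT)]
    simp only [fFun]
    rw [← hR1def, ← hR2def]
    linarith
  · intro x y₁ y₂ hx hy1 h12 hR1 hR2
    set R₁ := (y₁ + 2 * x - 1) ^ 2 + 16 * m - 8 * (n - 1 + y₁) * x with hR1def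
    set R₂ := (y₂ + 2 * x - 1) ^ 2 + 16 * m - 8 * (n - 1 + y₂) * x with hR2def
    have hnx : n * x ≤ 2 * m := by
      have := (le_div_iff₀ hn0).mp hx
      linarith
    have hT : 2 * x + 1 - y₂ ≤ Real.sqrt R₂ := by
      apply le_sqrt_of_sq_le
      nlinarith
    have hs2 : Real.sqrt R₂ ^ 2 = R₂ := Real.sq_sqrt hR2
    have hs2n : 0 ≤ Real.sqrt R₂ := Real.sqrt_nonneg _
    have he : 0 ≤ y₂ - y₁ := by linarith
    have key : Real.sqrt R₁ ≤ Real.sqrt R₂ + (y₂ - y₁) := by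
      have h1 : R₁ ≤ (Real.sqrt R₂ + (y₂ - y₁)) ^ 2 := by
        nlinarith [mul_nonneg he (sub_nonneg.mpr hT)]
      calc Real.sqrt R₁ ≤ Real.sqrt ((Real.sqrt R₂ + (y₂ - y₁)) ^ 2) := Real.sqrt_le_sqrt h1
        _ = |Real.sqrt R₂ + (y₂ - y₁)| := Real.sqrt_sq_eq_abs _
        _ = Real.sqrt R₂ + (y₂ - y₁) := abs_of_nonneg (by linarith)
    simp only [fFun]
    rw [← hR1def, ← hR2def]
    linarith
end

section
/- Let G be a graph of order n with m edges, maximum degree Δ, minimum degree δ, with signless Laplacian Q, and let M = Q² − (Δ + 2δ − 1)Q. Then every rowsum of M is at most 4m − 2(n − 1 + Δ)δ. -/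
open Matrix Finset BigOperators

theorem stmt17 (n : ℕ) (G : SimpleGraph (Fin n)) [DecidableRel G.Adj] (k : Fin n) :
    ∑ j, (signlessLaplacian G * signlessLaplacian G -
        ((G.maxDegree : ℝ) + 2 * G.minDegree - 1) • signlessLaplacian G) k j ≤
      4 * (G.edgeSet.ncard : ℝ) -
        2 * ((n : ℝ) - 1 + G.maxDegree) * G.minDegree := by
  classical
  have hQ : signlessLaplacian G =
      Matrix.diagonal (fun v => (G.degree v : ℝ)) + G.adjMatrix ℝ := by
    unfold signlessLaplacian
    congr!
  have hfil : ∀ i : Fin n, Finset.univ.filter (G.Adj i) = G.neighborFinset i := by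
    intro i; ext x; simp [SimpleGraph.mem_neighborFinset]
  have hrow : ∀ i : Fin n, ∑ j, signlessLaplacian G i j = 2 * (G.degree i : ℝ) := by
    intro i
    rw [hQ]
    simp only [Matrix.add_apply, Matrix.diagonal_apply, SimpleGraph.adjMatrix_apply]
    rw [Finset.sum_add_distrib, Finset.sum_ite_eq, if_pos (Finset.mem_univ i),
      ← Finset.sum_filter, hfil i]
    simp [SimpleGraph.card_neighborFinset_eq_degree]
    ring
  have hδd : (G.minDegree : ℝ) ≤ (G.degree k : ℝ) := by
    exact_mod_cast G.minDegree_le_degree k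
  have hdΔ : (G.degree k : ℝ) ≤ (G.maxDegree : ℝ) := by
    exact_mod_cast G.degree_le_maxDegree k
  -- rowsum of Q^2
  have hrow2 : ∑ j, (signlessLaplacian G * signlessLaplacian G) k j =
      2 * (G.degree k : ℝ) * (G.degree k : ℝ) +
        ∑ i ∈ G.neighborFinset k, 2 * (G.degree i : ℝ) := by
    simp only [Matrix.mul_apply]
    rw [Finset.sum_comm]
    have h1 : ∀ i : Fin n, ∑ j, signlessLaplacian G k i * signlessLaplacian G i j
        = signlessLaplacian G k i * (2 * (G.degree i : ℝ)) := by
      intro i; rw [← Finset.mul_sum, hrow i]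
    rw [Finset.sum_congr rfl fun i _ => h1 i]
    have h2 : ∀ i : Fin n, signlessLaplacian G k i * (2 * (G.degree i : ℝ)) =
        (if k = i then (G.degree k : ℝ) * (2 * (G.degree i : ℝ)) else 0) +
          (if G.Adj k i then 2 * (G.degree i : ℝ) else 0) := by
      intro i
      rw [hQ]
      simp only [Matrix.add_apply, Matrix.diagonal_apply, SimpleGraph.adjMatrix_apply]
      by_cases h : k = i <;> by_cases h' : G.Adj k i <;> simp [h, h'] <;> ring
    rw [Finset.sum_congr rfl fun i _ => h2 i]
    rw [Finset.sum_add_distrib, Finset.sum_ite_eq, if_pos (Finset.mem_univ k),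
      ← Finset.sum_filter, hfil k]
    try ring
  -- edge count
  have hm : (G.edgeSet.ncard : ℝ) = (G.edgeFinset.card : ℝ) := by
    rw [Set.ncard_eq_toFinset_card']
    congr!
  have hsum : ∑ i, (G.degree i : ℝ) = 2 * (G.edgeFinset.card : ℝ) := by
    exact_mod_cast congrArg (Nat.cast : ℕ → ℝ) G.sum_degrees_eq_twice_card_edges
  -- split the vertex set
  set N := G.neighborFinset k with hN
  have hkN : k ∉ N := by simp [hN]
  have hsub : insert k N ⊆ Finset.univ := Finset.subset_univ _
  set T := Finset.univ \ insert k N with hT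
  have hsplit : ∑ i ∈ T, (G.degree i : ℝ) + ∑ i ∈ insert k N, (G.degree i : ℝ)
      = ∑ i, (G.degree i : ℝ) := Finset.sum_sdiff hsub
  have hins : ∑ i ∈ insert k N, (G.degree i : ℝ)
      = (G.degree k : ℝ) + ∑ i ∈ N, (G.degree i : ℝ) := by
    rw [Finset.sum_insert hkN]
  have hcardT : (T.card : ℝ) = (n : ℝ) - 1 - (G.degree k : ℝ) := by
    have h1 : T.card = Fintype.card (Fin n) - (insert k N).card := by
      rw [hT, Finset.card_sdiff_of_subset hsub, Finset.card_univ]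
    have h2 : (insert k N).card = G.degree k + 1 := by
      rw [Finset.card_insert_of_notMem hkN, hN, SimpleGraph.card_neighborFinset_eq_degree]
    have h3 : G.degree k + 1 ≤ n := by
      simpa [h2] using Finset.card_le_univ (insert k N)
    rw [h1, h2, Fintype.card_fin]
    push_cast [Nat.cast_sub h3]
    ring
  have hTlow : (T.card : ℝ) * (G.minDegree : ℝ) ≤ ∑ i ∈ T, (G.degree i : ℝ) :=
    calc (T.card : ℝ) * (G.minDegree : ℝ) = ∑ _i ∈ T, (G.minDegree : ℝ) := by
          rw [Finset.sum_const, nsmul_eq_mul]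
      _ ≤ ∑ i ∈ T, (G.degree i : ℝ) :=
          Finset.sum_le_sum fun i _ => by exact_mod_cast G.minDegree_le_degree i
  have hNsum : ∑ i ∈ N, (G.degree i : ℝ) ≤ 2 * (G.edgeFinset.card : ℝ)
      - (G.degree k : ℝ) - ((n : ℝ) - 1 - (G.degree k : ℝ)) * G.minDegree := by
    have h5 := hsplit
    rw [hins, hsum] at h5
    nlinarith [hTlow, hcardT]
  -- put it together
  have hM : ∑ j, (signlessLaplacian G * signlessLaplacian G -
      ((G.maxDegree : ℝ) + 2 * G.minDegree - 1) • signlessLaplacian G) k j =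
      (2 * (G.degree k : ℝ) * (G.degree k : ℝ) + ∑ i ∈ N, 2 * (G.degree i : ℝ)) -
        ((G.maxDegree : ℝ) + 2 * G.minDegree - 1) * (2 * (G.degree k : ℝ)) := by
    simp only [Matrix.sub_apply, Matrix.smul_apply, smul_eq_mul, Finset.sum_sub_distrib,
      ← Finset.mul_sum]
    rw [hrow2, hrow k, Finset.mul_sum]
  have h2 : ∑ i ∈ N, 2 * (G.degree i : ℝ) = 2 * ∑ i ∈ N, (G.degree i : ℝ) :=
    (Finset.mul_sum _ _ _).symm
  rw [hM, hm, h2]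
  nlinarith [mul_nonneg (sub_nonneg.mpr hδd) (sub_nonneg.mpr hdΔ), hNsum]
end
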